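/- Far-field asymptotics: letting A = z_M/2 denote the area of the triangular element, r·Φ(r·u) → A as r → ∞, for any fixed unit vector u ∈ ℝ³. Equivalently, Φ(P) = A/|P| + O(1/|P|²) as |P| → ∞. -/

import Mathlib

open MeasureTheory Real Filter

private lemma triangle_far_field_aux (zM : ℝ) (hzM : 0 < zM) (a b c : ℝ)
    (hsum : a ^ 2 + b ^ 2 + c ^ 2 = 1) :
    Tendsto (fun r : ℝ => r * ∫ x in (0:ℝ)..1, ∫ z in (0:ℝ)..(zM * x),
      1 / Real.sqrt ((r * a - x) ^ 2 + (r * b) ^ 2 + (r * c - z) ^ 2))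
      atTop (nhds (zM / 2)) := by
  obtain ⟨C, hCdef⟩ : ∃ C : ℝ, C = 1 + zM := ⟨_, rfl⟩
  have hC1 : (1:ℝ) ≤ C := by rw [hCdef]; linarith
  have hC0 : (0:ℝ) < C := by linarith
  -- pointwise bounds on the squared distance
  have harg : ∀ r x z : ℝ, 2 * C ≤ r → x ∈ Set.Icc (0:ℝ) 1 → z ∈ Set.Icc (0:ℝ) (zM * x) →
      (r - C) ^ 2 ≤ (r * a - x) ^ 2 + (r * b) ^ 2 + (r * c - z) ^ 2 ∧
      (r * a - x) ^ 2 + (r * b) ^ 2 + (r * c - z) ^ 2 ≤ (r + C) ^ 2 := by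
    intro r x z hr hx hz
    obtain ⟨hx0, hx1⟩ := hx
    obtain ⟨hz0, hz1⟩ := hz
    have hzzM : z ≤ zM := le_trans hz1 (by nlinarith)
    have hq : x ^ 2 + z ^ 2 ≤ C ^ 2 := by rw [hCdef]; nlinarith
    have ht2 : (a * x + c * z) ^ 2 ≤ x ^ 2 + z ^ 2 := by
      nlinarith [sq_nonneg (a * z - c * x), sq_nonneg b, sq_nonneg (x ^ 2 + z ^ 2)]
    have htC : a * x + c * z ≤ C := by nlinarith
    have htC' : -C ≤ a * x + c * z := by nlinarith
    have hexp : (r * a - x) ^ 2 + (r * b) ^ 2 + (r * c - z) ^ 2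
        = r ^ 2 - 2 * r * (a * x + c * z) + (x ^ 2 + z ^ 2) := by
      linear_combination r ^ 2 * hsum
    rw [hexp]
    constructor
    · nlinarith [mul_nonneg (by linarith : (0:ℝ) ≤ C - (a * x + c * z))
        (by linarith : (0:ℝ) ≤ 2 * r - C - (a * x + c * z)), ht2]
    · nlinarith [mul_nonneg (by linarith : (0:ℝ) ≤ r)
        (by linarith : (0:ℝ) ≤ C + (a * x + c * z))]
  -- main two-sided bound
  have key : ∀ r : ℝ, 2 * C ≤ r →
      zM / 2 * (r * (r + C)⁻¹) ≤
        r * ∫ x in (0:ℝ)..1, ∫ z in (0:ℝ)..(zM * x),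
          1 / Real.sqrt ((r * a - x) ^ 2 + (r * b) ^ 2 + (r * c - z) ^ 2) ∧
      (r * ∫ x in (0:ℝ)..1, ∫ z in (0:ℝ)..(zM * x),
          1 / Real.sqrt ((r * a - x) ^ 2 + (r * b) ^ 2 + (r * c - z) ^ 2)) ≤
        zM / 2 * (r * (r - C)⁻¹) := by
    intro r hr
    have hr0 : (0:ℝ) < r := by linarith
    have hrC : (0:ℝ) < r - C := by linarith
    have hrC' : (0:ℝ) < r + C := by linarith
    obtain ⟨g, hgdef⟩ : ∃ g : ℝ → ℝ → ℝ, g = fun x z =>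
        (Real.sqrt (max 1 ((r * a - x) ^ 2 + (r * b) ^ 2 + (r * c - z) ^ 2)))⁻¹ := ⟨_, rfl⟩
    have hgcont : Continuous (Function.uncurry g) := by
      rw [hgdef]
      apply Continuous.inv₀
      · exact Real.continuous_sqrt.comp (by fun_prop)
      · intro p
        have h := Real.sqrt_le_sqrt
          (le_max_left 1 ((r * a - p.1) ^ 2 + (r * b) ^ 2 + (r * c - p.2) ^ 2))
        rw [Real.sqrt_one] at h
        positivity
    -- on the domain, g equals the original integrand
    have hgeq : ∀ x z : ℝ, x ∈ Set.Icc (0:ℝ) 1 → z ∈ Set.Icc (0:ℝ) (zM * x) →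
        1 / Real.sqrt ((r * a - x) ^ 2 + (r * b) ^ 2 + (r * c - z) ^ 2) = g x z := by
      intro x z hx hz
      have h1 : (r - C) ^ 2 ≤ (r * a - x) ^ 2 + (r * b) ^ 2 + (r * c - z) ^ 2 :=
        (harg r x z hr hx hz).1
      have h2 : (1:ℝ) ≤ (r * a - x) ^ 2 + (r * b) ^ 2 + (r * c - z) ^ 2 := by nlinarith
      rw [hgdef]
      simp only [max_eq_right h2, one_div]
    -- bounds on g
    have hgle : ∀ x z : ℝ, x ∈ Set.Icc (0:ℝ) 1 → z ∈ Set.Icc (0:ℝ) (zM * x) →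
        (r + C)⁻¹ ≤ g x z ∧ g x z ≤ (r - C)⁻¹ := by
      intro x z hx hz
      obtain ⟨h1, h2⟩ := harg r x z hr hx hz
      have h3 : (1:ℝ) ≤ (r * a - x) ^ 2 + (r * b) ^ 2 + (r * c - z) ^ 2 := by nlinarith
      have hs1 : r - C ≤ Real.sqrt ((r * a - x) ^ 2 + (r * b) ^ 2 + (r * c - z) ^ 2) := by
        have h := Real.sqrt_le_sqrt h1
        rwa [Real.sqrt_sq hrC.le] at h
      have hs2 : Real.sqrt ((r * a - x) ^ 2 + (r * b) ^ 2 + (r * c - z) ^ 2) ≤ r + C := by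
        have h := Real.sqrt_le_sqrt h2
        rwa [Real.sqrt_sq hrC'.le] at h
      have hspos : (0:ℝ) < Real.sqrt ((r * a - x) ^ 2 + (r * b) ^ 2 + (r * c - z) ^ 2) := by
        linarith
      rw [hgdef]
      simp only [max_eq_right h3]
      exact ⟨inv_anti₀ hspos hs2, inv_anti₀ hrC hs1⟩
    have hzMx : ∀ x : ℝ, x ∈ Set.Icc (0:ℝ) 1 → 0 ≤ zM * x := by
      intro x hx; exact mul_nonneg hzM.le hx.1
    -- inner integral bounds
    have hinner : ∀ x : ℝ, x ∈ Set.Icc (0:ℝ) 1 →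
        zM * x * (r + C)⁻¹ ≤ (∫ z in (0:ℝ)..(zM * x), g x z) ∧
        (∫ z in (0:ℝ)..(zM * x), g x z) ≤ zM * x * (r - C)⁻¹ := by
      intro x hx
      have h0 : (0:ℝ) ≤ zM * x := hzMx x hx
      have hgint : IntervalIntegrable (g x) volume 0 (zM * x) := by
        apply Continuous.intervalIntegrable
        exact hgcont.comp (continuous_const.prodMk continuous_id)
      constructor
      · have h := intervalIntegral.integral_mono_on h0
          (intervalIntegrable_const (c := (r + C)⁻¹)) hgint
          (fun z hz => (hgle x z hx hz).1)
        simpa [smul_eq_mul, mul_comm] using h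
      · have h := intervalIntegral.integral_mono_on h0 hgint
          (intervalIntegrable_const (c := (r - C)⁻¹))
          (fun z hz => (hgle x z hx hz).2)
        simpa [smul_eq_mul, mul_comm] using h
    -- continuity of the inner integral as a function of x
    have hIcont : Continuous fun x => ∫ z in (0:ℝ)..(zM * x), g x z :=
      intervalIntegral.continuous_parametric_intervalIntegral_of_continuous hgcont
        (continuous_const.mul continuous_id)
    have hΦeq : (∫ x in (0:ℝ)..1, ∫ z in (0:ℝ)..(zM * x),
        1 / Real.sqrt ((r * a - x) ^ 2 + (r * b) ^ 2 + (r * c - z) ^ 2))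
        = ∫ x in (0:ℝ)..1, ∫ z in (0:ℝ)..(zM * x), g x z := by
      apply intervalIntegral.integral_congr
      intro x hx
      rw [Set.uIcc_of_le (by norm_num : (0:ℝ) ≤ 1)] at hx
      apply intervalIntegral.integral_congr
      intro z hz
      rw [Set.uIcc_of_le (hzMx x hx)] at hz
      exact hgeq x z hx hz
    have hIint : IntervalIntegrable (fun x => ∫ z in (0:ℝ)..(zM * x), g x z) volume 0 1 :=
      hIcont.intervalIntegrable _ _
    have hlin1 : IntervalIntegrable (fun x : ℝ => zM * x * (r + C)⁻¹) volume 0 1 := by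
      apply Continuous.intervalIntegrable; fun_prop
    have hlin2 : IntervalIntegrable (fun x : ℝ => zM * x * (r - C)⁻¹) volume 0 1 := by
      apply Continuous.intervalIntegrable; fun_prop
    have hval : ∀ k : ℝ, (∫ x in (0:ℝ)..1, zM * x * k) = zM / 2 * k := by
      intro k
      have hfun : (fun x : ℝ => zM * x * k) = fun x : ℝ => (zM * k) * x := by
        funext x; ring
      rw [hfun, intervalIntegral.integral_const_mul, integral_id]
      ring
    have hlow : zM / 2 * (r + C)⁻¹ ≤ ∫ x in (0:ℝ)..1, ∫ z in (0:ℝ)..(zM * x),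
        1 / Real.sqrt ((r * a - x) ^ 2 + (r * b) ^ 2 + (r * c - z) ^ 2) := by
      rw [hΦeq, ← hval (r + C)⁻¹]
      exact intervalIntegral.integral_mono_on (by norm_num) hlin1 hIint
        (fun x hx => (hinner x hx).1)
    have hhigh : (∫ x in (0:ℝ)..1, ∫ z in (0:ℝ)..(zM * x),
        1 / Real.sqrt ((r * a - x) ^ 2 + (r * b) ^ 2 + (r * c - z) ^ 2))
        ≤ zM / 2 * (r - C)⁻¹ := by
      rw [hΦeq, ← hval (r - C)⁻¹]
      exact intervalIntegral.integral_mono_on (by norm_num) hIint hlin2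
        (fun x hx => (hinner x hx).2)
    constructor
    · calc zM / 2 * (r * (r + C)⁻¹) = r * (zM / 2 * (r + C)⁻¹) := by ring
        _ ≤ _ := mul_le_mul_of_nonneg_left hlow hr0.le
    · calc _ ≤ r * (zM / 2 * (r - C)⁻¹) := mul_le_mul_of_nonneg_left hhigh hr0.le
        _ = zM / 2 * (r * (r - C)⁻¹) := by ring
  -- limits of the bounding functions
  have hlim1 : Tendsto (fun r : ℝ => zM / 2 * (r * (r + C)⁻¹)) atTop (nhds (zM / 2)) := by
    have h0 : Tendsto (fun r : ℝ => (r + C)⁻¹) atTop (nhds 0) :=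
      tendsto_inv_atTop_zero.comp (tendsto_atTop_add_const_right atTop C tendsto_id)
    have h1 : Tendsto (fun r : ℝ => 1 - C * (r + C)⁻¹) atTop (nhds 1) := by
      have h := (tendsto_const_nhds (x := (1:ℝ)) (f := atTop (α := ℝ))).sub (h0.const_mul C)
      simpa only [mul_zero, sub_zero] using h
    have h2 : Tendsto (fun r : ℝ => r * (r + C)⁻¹) atTop (nhds 1) := by
      apply h1.congr'
      filter_upwards [eventually_ge_atTop (1:ℝ)] with r hr
      have hne : r + C ≠ 0 := by positivity
      field_simp
      ring
    have h3 := (tendsto_const_nhds (x := zM / 2) (f := atTop (α := ℝ))).mul h2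
    simpa only [mul_one] using h3
  have hlim2 : Tendsto (fun r : ℝ => zM / 2 * (r * (r - C)⁻¹)) atTop (nhds (zM / 2)) := by
    have h0 : Tendsto (fun r : ℝ => (r - C)⁻¹) atTop (nhds 0) := by
      apply tendsto_inv_atTop_zero.comp
      simpa [sub_eq_add_neg] using
        tendsto_atTop_add_const_right atTop (-C) (tendsto_id (α := ℝ))
    have h1 : Tendsto (fun r : ℝ => 1 + C * (r - C)⁻¹) atTop (nhds 1) := by
      have h := (tendsto_const_nhds (x := (1:ℝ)) (f := atTop (α := ℝ))).add (h0.const_mul C)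
      simpa only [mul_zero, add_zero] using h
    have h2 : Tendsto (fun r : ℝ => r * (r - C)⁻¹) atTop (nhds 1) := by
      apply h1.congr'
      filter_upwards [eventually_gt_atTop C] with r hr
      have hne : r - C ≠ 0 := by
        have : (0:ℝ) < r - C := by linarith
        exact this.ne'
      field_simp
      ring
    have h3 := (tendsto_const_nhds (x := zM / 2) (f := atTop (α := ℝ))).mul h2
    simpa only [mul_one] using h3
  refine tendsto_of_tendsto_of_tendsto_of_le_of_le' hlim1 hlim2 ?_ ?_
  · filter_upwards [eventually_ge_atTop (2 * C)] with r hr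
    exact (key r hr).1
  · filter_upwards [eventually_ge_atTop (2 * C)] with r hr
    exact (key r hr).2

/-- Far-field asymptotics: r·Φ(r·u) → A = zM/2 (the area of the
triangle) as r → ∞, for any unit vector u. -/
theorem triangle_potential_far_field (zM : ℝ) (hzM : 0 < zM)
    (Φ : EuclideanSpace ℝ (Fin 3) → ℝ)
    (hΦ : ∀ P, Φ P = ∫ x in (0:ℝ)..1, ∫ z in (0:ℝ)..(zM * x),
        1 / Real.sqrt ((P 0 - x) ^ 2 + (P 1) ^ 2 + (P 2 - z) ^ 2))
    (u : EuclideanSpace ℝ (Fin 3)) (hu : ‖u‖ = 1) :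
    Tendsto (fun r : ℝ => r * Φ (r • u)) atTop (nhds (zM / 2)) := by
  have hsum : (u 0) ^ 2 + (u 1) ^ 2 + (u 2) ^ 2 = 1 := by
    have h := hu
    rw [EuclideanSpace.norm_eq] at h
    simp only [Fin.sum_univ_three, Real.norm_eq_abs, sq_abs] at h
    nlinarith [Real.sq_sqrt (by positivity : (0:ℝ) ≤ (u 0) ^ 2 + (u 1) ^ 2 + (u 2) ^ 2), h]
  have hmain := triangle_far_field_aux zM hzM (u 0) (u 1) (u 2) hsum
  apply hmain.congr
  intro r
  congr 1
  rw [hΦ]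
  have h0 : (r • u : EuclideanSpace ℝ (Fin 3)) 0 = r * u 0 := rfl
  have h1 : (r • u : EuclideanSpace ℝ (Fin 3)) 1 = r * u 1 := rfl
  have h2 : (r • u : EuclideanSpace ℝ (Fin 3)) 2 = r * u 2 := rfl
  rw [h0, h1, h2]
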